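/- arXiv:2509.16042 — 3 statements merged into one kernel-verified Lean document; each statement's English description precedes it below -/
import Mathlib

section
/- Let L be a free abelian group with basis ℓ, e₁, …, e₆. Let [L₀] = 2ℓ − e₁ − e₂ − e₃ − e₄ − e₅ (so the coefficient of e₆ is 0) and [C] = 3ℓ − e₁ − ⋯ − e₆ − [L₀] = ℓ − e₆. Then the quotient L/(ℤ[L₀] + ℤ[C]) is torsion-free; i.e., if n·D ∈ ℤ[L₀] + ℤ[C] for some D ∈ L and some integer n > 0, then D ∈ ℤ[L₀] + ℤ[C]. -/
/-- Torsion-freeness of the quotient of the free abelian group on ℓ, e₁, …, e₆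
by the span of [L₀] = 2ℓ − e₁ − e₂ − e₃ − e₄ − e₅ and [C] = ℓ − e₆. -/
theorem stmt0 (D : Fin 7 → ℤ) (n : ℤ) (hn : 0 < n)
    (h : n • D ∈ Submodule.span ℤ
      ({![2,-1,-1,-1,-1,-1,0], ![1,0,0,0,0,0,-1]} : Set (Fin 7 → ℤ))) :
    D ∈ Submodule.span ℤ
      ({![2,-1,-1,-1,-1,-1,0], ![1,0,0,0,0,0,-1]} : Set (Fin 7 → ℤ)) := by
  rw [Submodule.mem_span_pair] at h ⊢
  obtain ⟨a, b, hab⟩ := h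
  have h0 : a * 2 + b * 1 = n * D 0 := congrFun hab 0
  have h1 : a * (-1) + b * 0 = n * D 1 := congrFun hab 1
  have h2 : a * (-1) + b * 0 = n * D 2 := congrFun hab 2
  have h3 : a * (-1) + b * 0 = n * D 3 := congrFun hab 3
  have h4 : a * (-1) + b * 0 = n * D 4 := congrFun hab 4
  have h5 : a * (-1) + b * 0 = n * D 5 := congrFun hab 5
  have h6 : a * 0 + b * (-1) = n * D 6 := congrFun hab 6
  have hne : n ≠ 0 := hn.ne'
  have e0 := mul_left_cancel₀ hne (show n * D 0 = n * (-2 * D 1 - D 6) by linarith)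
  have e2 := mul_left_cancel₀ hne (show n * D 2 = n * D 1 by linarith)
  have e3 := mul_left_cancel₀ hne (show n * D 3 = n * D 1 by linarith)
  have e4 := mul_left_cancel₀ hne (show n * D 4 = n * D 1 by linarith)
  have e5 := mul_left_cancel₀ hne (show n * D 5 = n * D 1 by linarith)
  refine ⟨-D 1, -D 6, ?_⟩
  funext i
  fin_cases i
  · show (-D 1) * 2 + (-D 6) * 1 = D 0; linarith
  · show (-D 1) * (-1) + (-D 6) * 0 = D 1; linarith
  · show (-D 1) * (-1) + (-D 6) * 0 = D 2; linarith
  · show (-D 1) * (-1) + (-D 6) * 0 = D 3; linarith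
  · show (-D 1) * (-1) + (-D 6) * 0 = D 4; linarith
  · show (-D 1) * (-1) + (-D 6) * 0 = D 5; linarith
  · show (-D 1) * 0 + (-D 6) * (-1) = D 6; linarith
end

section
/- Let L be a free abelian group with basis ℓ, e₁, …, e₆. Let [L₀] = ℓ − e₁ − e₂ and [C] = 3ℓ − e₁ − ⋯ − e₆ − [L₀] = 2ℓ − e₃ − e₄ − e₅ − e₆. Then the quotient L/(ℤ[L₀] + ℤ[C]) is torsion-free. -/
/-- Torsion-freeness of the quotient of the free abelian group on ℓ, e₁, …, e₆
by the span of [L₀] = ℓ − e₁ − e₂ and [C] = 2ℓ − e₃ − e₄ − e₅ − e₆. -/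
theorem stmt2 (D : Fin 7 → ℤ) (n : ℤ) (hn : 0 < n)
    (h : n • D ∈ Submodule.span ℤ
      ({![1,-1,-1,0,0,0,0], ![2,0,0,-1,-1,-1,-1]} : Set (Fin 7 → ℤ))) :
    D ∈ Submodule.span ℤ
      ({![1,-1,-1,0,0,0,0], ![2,0,0,-1,-1,-1,-1]} : Set (Fin 7 → ℤ)) := by
  rw [Submodule.mem_span_pair] at h ⊢
  obtain ⟨a, b, hab⟩ := h
  have h1 := congrFun hab 1
  have h3 := congrFun hab 3
  simp [Matrix.cons_val_succ, Matrix.cons_val_zero] at h1 h3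
  have ha : a = n * (-(D 1)) := by linarith
  have hb : b = n * (-(D 3)) := by linarith
  refine ⟨-(D 1), -(D 3), ?_⟩
  have hne : n ≠ 0 := hn.ne'
  apply smul_right_injective (Fin 7 → ℤ) hne
  show n • _ = n • D
  rw [← hab, ha, hb]
  module
end

section
/- Let F ∈ ℚ[t] be a separable cubic polynomial with nonzero t² coefficient and distinct roots α₁, α₂, α₃ in an algebraic closure. Then for all but finitely many a ∈ ℚ^×, the polynomial H(t) = F(t)·F(t − a) has six distinct roots, the sum of its roots is nonzero, and no three of its roots sum to zero. -/
open Polynomial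

/-- For a separable cubic F ∈ ℚ[t] with nonzero t²-coefficient, for all but
finitely many a ∈ ℚ^×, the polynomial H(t) = F(t)·F(t − a) has six distinct
roots (in an algebraic closure), nonzero sum of roots, and no three of its
roots sum to zero. -/
theorem stmt15 (F : ℚ[X]) (hdeg : F.natDegree = 3) (hsep : F.Separable)
    (hc2 : F.coeff 2 ≠ 0) :
    {a : ℚ | a ≠ 0 ∧
      ¬ (letI H : ℚ[X] := F * F.comp (X - C a)
         letI R : Multiset (AlgebraicClosure ℚ) :=
           (H.map (algebraMap ℚ (AlgebraicClosure ℚ))).roots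
         Multiset.card R = 6 ∧ R.Nodup ∧ R.sum ≠ 0 ∧
           ∀ S ≤ R, Multiset.card S = 3 → S.sum ≠ 0)}.Finite := by
  classical
  set K := AlgebraicClosure ℚ with hK
  have hF0 : F ≠ 0 := fun h => by simp [h] at hdeg
  set G : K[X] := F.map (algebraMap ℚ K) with hGdef
  have hGdeg : G.natDegree = 3 := by rw [hGdef, natDegree_map]; exact hdeg
  have hG0 : G ≠ 0 := fun h => by simp [h] at hGdeg
  set M : Multiset K := G.roots with hMdef
  have hMcardDeg : Multiset.card M = G.natDegree :=
    (splits_iff_card_roots.mp (IsAlgClosed.splits G))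
  have hMcard : Multiset.card M = 3 := hMcardDeg.trans hGdeg
  have hMnodup : M.Nodup := nodup_roots (hsep.map)
  have hlc : G.leadingCoeff ≠ 0 := leadingCoeff_ne_zero.mpr hG0
  -- the sum of the roots of G is nonzero
  have hMsum : M.sum ≠ 0 := by
    have hmo : (G * C G.leadingCoeff⁻¹).Monic := monic_mul_leadingCoeff_inv hG0
    have hdeg' : (G * C G.leadingCoeff⁻¹).natDegree = 3 := by
      rw [natDegree_mul_C (inv_ne_zero hlc), hGdeg]
    have hroots' : (G * C G.leadingCoeff⁻¹).roots = M := by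
      rw [roots_mul (mul_ne_zero hG0 (C_ne_zero.mpr (inv_ne_zero hlc))), roots_C, ← hMdef,
        add_zero]
    have hnext : (G * C G.leadingCoeff⁻¹).nextCoeff = -M.sum := by
      rw [(IsAlgClosed.splits _).nextCoeff_eq_neg_sum_roots_of_monic hmo, hroots']
    have hnextval : (G * C G.leadingCoeff⁻¹).nextCoeff
        = G.coeff 2 * G.leadingCoeff⁻¹ := by
      rw [nextCoeff, hdeg']
      simp [coeff_mul_C]
    have hc2' : G.coeff 2 ≠ 0 := by
      rw [hGdef, coeff_map]
      exact fun h => hc2 ((algebraMap ℚ K).injective (by simpa using h))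
    intro h
    rw [h, neg_zero] at hnext
    rw [hnext] at hnextval
    exact (mul_ne_zero hc2' (inv_ne_zero hlc)) hnextval.symm
  -- the bad polynomial
  set Q1 : K[X] := (M.bind fun x => M.map fun y => X - C (x - y)).prod with hQ1def
  set pairs : Multiset (Multiset K × Multiset K) :=
    M.powerset.bind fun S₁ => (M.powerset.filter fun T => T ≠ 0).map fun T => (S₁, T)
    with hpairsdef
  set Q2 : K[X] :=
    (pairs.map fun p => C (Multiset.card p.2 : K) * X + C (p.1.sum + p.2.sum)).prod
    with hQ2def
  set Q : K[X] := Q1 * Q2 with hQdef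
  have hfac2_ne : ∀ p : Multiset K × Multiset K, p.2 ≠ 0 →
      C (Multiset.card p.2 : K) * X + C (p.1.sum + p.2.sum) ≠ 0 := by
    intro p hp h
    have hc : (C (Multiset.card p.2 : K) * X + C (p.1.sum + p.2.sum)).coeff 1
        = (Multiset.card p.2 : K) := by simp
    rw [h] at hc
    simp only [coeff_zero] at hc
    have : (Multiset.card p.2 : K) ≠ 0 := by
      simp [Multiset.card_eq_zero, hp]
    exact this hc.symm
  have hQ0 : Q ≠ 0 := by
    apply mul_ne_zero
    · apply Multiset.prod_ne_zero
      intro h0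
      obtain ⟨x, hx, h⟩ := Multiset.mem_bind.mp h0
      obtain ⟨y, hy, h⟩ := Multiset.mem_map.mp h
      exact X_sub_C_ne_zero (x - y) h
    · apply Multiset.prod_ne_zero
      intro h0
      obtain ⟨p, hp, h⟩ := Multiset.mem_map.mp h0
      obtain ⟨S₁, hS₁, h'⟩ := Multiset.mem_bind.mp hp
      obtain ⟨T, hT, h''⟩ := Multiset.mem_map.mp h'
      have hT0 : p.2 ≠ 0 := by
        rw [← h'']; exact (Multiset.mem_filter.mp hT).2
      exact hfac2_ne p hT0 h
  -- reduce to the preimage of the roots of Q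
  apply Set.Finite.subset
    (Set.Finite.preimage ((algebraMap ℚ K).injective.injOn)
      (Q.roots.toFinset.finite_toSet) (f := fun a : ℚ => algebraMap ℚ K a))
  intro a ha
  obtain ⟨ha0, hbad⟩ := ha
  by_contra hroot
  apply hbad
  set b : K := algebraMap ℚ K a with hbdef
  have hQb : Q.eval b ≠ 0 := by
    intro h
    exact hroot (by
      simp only [Set.mem_preimage, Finset.mem_coe, Multiset.mem_toFinset]
      exact (mem_roots hQ0).mpr h)
  -- consequences of Q(b) ≠ 0
  have hQ1b : ∀ x ∈ M, ∀ y ∈ M, b ≠ x - y := by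
    intro x hx y hy hxy
    apply hQb
    apply eval_eq_zero_of_dvd_of_eval_eq_zero
      (dvd_mul_of_dvd_left
        (Multiset.dvd_prod (Multiset.mem_bind.mpr
          ⟨x, hx, Multiset.mem_map.mpr ⟨y, hy, rfl⟩⟩)) Q2)
    simp [hxy]
  have hQ2b : ∀ S₁ ≤ M, ∀ T ≤ M, T ≠ 0 →
      (Multiset.card T : K) * b + (S₁.sum + T.sum) ≠ 0 := by
    intro S₁ hS₁ T hT hT0 hzero
    apply hQb
    have hmemp : (S₁, T) ∈ pairs := by
      rw [hpairsdef]
      exact Multiset.mem_bind.mpr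
        ⟨S₁, Multiset.mem_powerset.mpr hS₁, Multiset.mem_map.mpr
          ⟨T, Multiset.mem_filter.mpr ⟨Multiset.mem_powerset.mpr hT, hT0⟩, rfl⟩⟩
    have hmemf : C (Multiset.card T : K) * X + C (S₁.sum + T.sum) ∈
        pairs.map fun p => C (Multiset.card p.2 : K) * X + C (p.1.sum + p.2.sum) :=
      Multiset.mem_map.mpr ⟨(S₁, T), hmemp, rfl⟩
    apply eval_eq_zero_of_dvd_of_eval_eq_zero
      (dvd_mul_of_dvd_right (Multiset.dvd_prod hmemf) Q1)
    simpa using hzero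
  -- decompose the root multiset
  have hGfact : C G.leadingCoeff * (M.map fun α => X - C α).prod = G :=
    C_leadingCoeff_mul_prod_multiset_X_sub_C hMcardDeg
  have hcomp : G.comp (X - C b) = C G.leadingCoeff *
      ((M.map fun α => α + b).map fun c => X - C c).prod := by
    conv_lhs => rw [← hGfact]
    rw [mul_comp, C_comp, multiset_prod_comp, Multiset.map_map, Multiset.map_map]
    congr 1
    congr 1
    apply Multiset.map_congr rfl
    intro α _
    simp only [Function.comp_apply, sub_comp, X_comp, C_comp, C_add]
    ring
  have hcomp0 : G.comp (X - C b) ≠ 0 := by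
    rw [hcomp]
    apply mul_ne_zero (C_ne_zero.mpr hlc)
    apply Multiset.prod_ne_zero
    intro h0
    obtain ⟨c, hc, h⟩ := Multiset.mem_map.mp h0
    exact X_sub_C_ne_zero c h
  have hRe : ((F * F.comp (X - C a)).map (algebraMap ℚ K)).roots
      = M + M.map (fun α => α + b) := by
    rw [Polynomial.map_mul, Polynomial.map_comp, Polynomial.map_sub, map_X, map_C,
      ← hGdef, ← hbdef, roots_mul (mul_ne_zero hG0 hcomp0), ← hMdef, hcomp,
      roots_C_mul _ hlc, roots_multiset_prod_X_sub_C]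
  refine ⟨?_, ?_, ?_, ?_⟩
  · show Multiset.card ((F * F.comp (X - C a)).map (algebraMap ℚ K)).roots = 6
    rw [hRe]
    simp [hMcard]
  · show ((F * F.comp (X - C a)).map (algebraMap ℚ K)).roots.Nodup
    rw [hRe, Multiset.nodup_add]
    refine ⟨hMnodup, hMnodup.map (add_left_injective b), ?_⟩
    rw [Multiset.disjoint_left]
    intro x hx hx'
    obtain ⟨y, hy, hxy⟩ := Multiset.mem_map.mp hx'
    exact hQ1b x hx y hy (by rw [← hxy]; ring)
  · show ((F * F.comp (X - C a)).map (algebraMap ℚ K)).roots.sum ≠ 0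
    rw [hRe, Multiset.sum_add]
    have hmap : (M.map fun α => α + b).sum = M.sum + (Multiset.card M : K) * b := by
      rw [Multiset.sum_map_add]
      simp [Multiset.map_id', mul_comm]
    rw [hmap, hMcard]
    intro h
    apply hQ2b M le_rfl M le_rfl (by
      intro h0
      rw [h0] at hMcard
      simp at hMcard)
    rw [hMcard]
    linear_combination h
  · show ∀ S ≤ ((F * F.comp (X - C a)).map (algebraMap ℚ K)).roots,
      Multiset.card S = 3 → S.sum ≠ 0
    rw [hRe]
    intro S hS hScard
    set S₁ : Multiset K := S ∩ M with hS₁def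
    have hS₁le : S₁ ≤ M := Multiset.inter_le_right
    have hS₂le : S - M ≤ M.map (fun α => α + b) := by
      rw [Multiset.sub_le_iff_le_add]
      exact hS.trans (le_of_eq (add_comm _ _))
    have hsplit : S₁ + (S - M) = S := by
      ext x
      rw [Multiset.count_add, Multiset.count_inter, Multiset.count_sub]
      omega
    set T : Multiset K := (S - M).map (fun x => x - b) with hTdef
    have hT : T ≤ M := by
      have h := Multiset.map_le_map (f := fun x => x - b) hS₂le
      rwa [Multiset.map_map,
        show ((fun x => x - b) ∘ fun α => α + b) = id by funext x; simp,
        Multiset.map_id] at h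
    have hTback : T.map (fun x => x + b) = S - M := by
      rw [hTdef, Multiset.map_map]
      rw [show ((fun x => x + b) ∘ fun x => x - b) = id by funext x; simp, Multiset.map_id]
    have hsum2 : (S - M).sum = T.sum + (Multiset.card T : K) * b := by
      rw [← hTback, Multiset.sum_map_add]
      simp [Multiset.map_id', mul_comm, Multiset.card_map]
    by_cases hT0 : T = 0
    · have hSM0 : S - M = 0 := by
        rw [← hTback, hT0, Multiset.map_zero]
      have hSS₁ : S = S₁ := by rw [← hsplit, hSM0, add_zero]
      have hSle : S ≤ M := hSS₁ ▸ hS₁le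
      have : S = M := Multiset.eq_of_le_of_card_le hSle (by rw [hMcard, hScard])
      rw [this]; exact hMsum
    · intro h0
      apply hQ2b S₁ hS₁le T hT hT0
      have hsumS : S.sum = S₁.sum + (S - M).sum := by
        conv_lhs => rw [← hsplit]
        rw [Multiset.sum_add]
      rw [hsumS, hsum2] at h0
      linear_combination h0
end
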